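/- arXiv:2201.11922 — 4 statements merged into one kernel-verified Lean document; each statement's English description precedes it below -/
import Mathlib

section
/- Let K be a real number with K² ≠ 3 and K ≠ −3 and K ≠ −5/3. Set ν = −(K³ + 3K² + 9K + 11)/((K + 3)(K² − 3)) and U = (3 − K²)/(6K + 10). Then 4(1+ν)² U³ − 3(1+ν)(ν+3) U² + 6(1+ν) U − 2 = 0. -/
/-- With ν = −(K³+3K²+9K+11)/((K+3)(K²−3)) and U = (3−K²)/(6K+10), one has
4(1+ν)²U³ − 3(1+ν)(ν+3)U² + 6(1+ν)U − 2 = 0. -/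
theorem stmt_2 (K : ℝ) (h1 : K ^ 2 ≠ 3) (h2 : K ≠ -3) (h3 : K ≠ -5 / 3) :
    let ν : ℝ := -(K ^ 3 + 3 * K ^ 2 + 9 * K + 11) / ((K + 3) * (K ^ 2 - 3))
    let U : ℝ := (3 - K ^ 2) / (6 * K + 10)
    4 * (1 + ν) ^ 2 * U ^ 3 - 3 * (1 + ν) * (ν + 3) * U ^ 2 + 6 * (1 + ν) * U - 2 = 0 := by
  intro ν U
  have hs : K ^ 2 - 3 ≠ 0 := sub_ne_zero.mpr h1
  have hk3 : K + 3 ≠ 0 := by intro h; apply h2; linarith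
  have hd : (K + 3) * (K ^ 2 - 3) ≠ 0 := mul_ne_zero hk3 hs
  have hk5 : 6 * K + 10 ≠ 0 := by
    intro h; apply h3; linarith
  show 4 * (1 + ν) ^ 2 * U ^ 3 - 3 * (1 + ν) * (ν + 3) * U ^ 2 + 6 * (1 + ν) * U - 2 = 0
  simp only [ν, U]
  have hk5' : K * 6 + 10 ≠ 0 := by rw [mul_comm]; exact hk5
  field_simp
  ring
end

section
/- Let x, y be real numbers with 0 ≤ y < 1 and 0 ≤ x < (1−y)²/4. Then the double series ∑_{k,k'≥0} ((2k+k')!/(k! k! k'!)) x^k y^{k'} converges and equals ((1−y)² − 4x)^{−1/2}. -/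
open Finset

noncomputable def cbR (k : ℕ) : ℝ := (Nat.centralBinom k : ℝ)

lemma cbR_nonneg (k : ℕ) : 0 ≤ cbR k := Nat.cast_nonneg _

lemma cbR_rec (k : ℕ) : ((k : ℝ) + 1) * cbR (k + 1) = 2 * (2 * k + 1) * cbR k := by
  have h := Nat.succ_mul_centralBinom_succ k
  have h2 := congrArg (fun n : ℕ => (n : ℝ)) h
  simp only [cbR]
  push_cast at h2
  linarith

noncomputable def SS (n : ℕ) : ℝ := ∑ k ∈ range (n + 1), cbR k * cbR (n - k)
noncomputable def TT (n : ℕ) : ℝ := ∑ k ∈ range (n + 1), (k : ℝ) * cbR k * cbR (n - k)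

lemma two_TT (n : ℕ) : 2 * TT n = n * SS n := by
  have h1 : TT n = ∑ k ∈ range (n + 1), ((n - k : ℕ) : ℝ) * cbR (n - k) * cbR k := by
    rw [TT, ← Finset.sum_range_reflect]
    apply Finset.sum_congr rfl
    intro k hk
    simp only [Finset.mem_range] at hk
    have hk' : k ≤ n := Nat.lt_succ_iff.mp hk
    rw [Nat.add_sub_cancel, Nat.sub_sub_self hk']
  have : TT n + TT n = n * SS n := by
    nth_rewrite 2 [h1]
    rw [TT, SS, ← Finset.sum_add_distrib, Finset.mul_sum]
    apply Finset.sum_congr rfl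
    intro k hk
    simp only [Finset.mem_range] at hk
    have hk' : k ≤ n := Nat.lt_succ_iff.mp hk
    have : ((n - k : ℕ) : ℝ) = (n : ℝ) - k := by
      rw [Nat.cast_sub hk']
    rw [this]
    ring
  linarith

lemma TT_succ (n : ℕ) : TT (n + 1) = 4 * TT n + 2 * SS n := by
  rw [TT, Finset.sum_range_succ']
  simp only [Nat.cast_zero, zero_mul, add_zero, Nat.cast_add, Nat.cast_one]
  have : ∀ i ∈ range (n + 1), ((i : ℝ) + 1) * cbR (i + 1) * cbR (n + 1 - (i + 1)) =
      4 * ((i : ℝ) * cbR i * cbR (n - i)) + 2 * (cbR i * cbR (n - i)) := by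
    intro i hi
    have : n + 1 - (i + 1) = n - i := by omega
    rw [this, cbR_rec]
    ring
  rw [Finset.sum_congr rfl this, Finset.sum_add_distrib, ← Finset.mul_sum, ← Finset.mul_sum,
    TT, SS]

lemma SS_eq (n : ℕ) : SS n = 4 ^ n := by
  induction n with
  | zero => simp [SS, cbR, Nat.centralBinom]
  | succ n ih =>
    have h1 := two_TT (n + 1)
    have h2 := TT_succ n
    have h3 := two_TT n
    have hn : ((n : ℝ) + 1) ≠ 0 := by positivity
    have : ((n : ℝ) + 1) * SS (n + 1) = ((n : ℝ) + 1) * (4 * SS n) := by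
      push_cast at h1
      nlinarith
    have := mul_left_cancel₀ hn this
    rw [this, ih]; ring

lemma cbR_le (n : ℕ) : cbR n ≤ 4 ^ n := by
  have h : cbR n * cbR 0 ≤ SS n := by
    have h0 : n ∈ range (n + 1) := by simp
    have := Finset.single_le_sum (f := fun k => cbR k * cbR (n - k))
      (fun i _ => mul_nonneg (cbR_nonneg i) (cbR_nonneg _)) h0
    simpa [SS] using this
  have h0 : cbR 0 = 1 := by simp [cbR, Nat.centralBinom]
  rw [h0, mul_one] at h
  rw [SS_eq] at h
  exact h

lemma cb_summable {t : ℝ} (ht0 : 0 ≤ t) (ht : t < 1 / 4) :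
    Summable (fun k => cbR k * t ^ k) := by
  apply Summable.of_nonneg_of_le
    (fun k => mul_nonneg (cbR_nonneg k) (pow_nonneg ht0 k))
    (fun k => ?_) (summable_geometric_of_lt_one (by positivity) (by linarith : 4 * t < 1))
  calc cbR k * t ^ k ≤ 4 ^ k * t ^ k :=
        mul_le_mul_of_nonneg_right (cbR_le k) (pow_nonneg ht0 k)
    _ = (4 * t) ^ k := by rw [mul_pow]

lemma cb_tsum {t : ℝ} (ht0 : 0 ≤ t) (ht : t < 1 / 4) :
    HasSum (fun k => cbR k * t ^ k) (1 / Real.sqrt (1 - 4 * t)) := by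
  have hsum := cb_summable ht0 ht
  set f := ∑' k, cbR k * t ^ k with hf
  have h4t : (0:ℝ) < 1 - 4 * t := by linarith
  have hprod : Summable (fun p : ℕ × ℕ => (cbR p.1 * t ^ p.1) * (cbR p.2 * t ^ p.2)) :=
    hsum.mul_of_nonneg hsum
      (fun k => mul_nonneg (cbR_nonneg k) (pow_nonneg ht0 k))
      (fun k => mul_nonneg (cbR_nonneg k) (pow_nonneg ht0 k))
  have hsq : f * f = (1 - 4 * t)⁻¹ := by
    rw [hf, Summable.tsum_mul_tsum_eq_tsum_sum_range hsum hsum hprod]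
    have hterm : ∀ n : ℕ, ∑ k ∈ range (n + 1), (cbR k * t ^ k) * (cbR (n - k) * t ^ (n - k))
        = (4 * t) ^ n := by
      intro n
      have : ∀ k ∈ range (n + 1), (cbR k * t ^ k) * (cbR (n - k) * t ^ (n - k))
          = cbR k * cbR (n - k) * t ^ n := by
        intro k hk
        simp only [Finset.mem_range] at hk
        have hk' : k ≤ n := Nat.lt_succ_iff.mp hk
        rw [show (cbR k * t ^ k) * (cbR (n - k) * t ^ (n - k))
            = cbR k * cbR (n - k) * (t ^ k * t ^ (n - k)) by ring,
          ← pow_add, Nat.add_sub_cancel' hk']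
      rw [Finset.sum_congr rfl this, ← Finset.sum_mul]
      have : ∑ k ∈ range (n + 1), cbR k * cbR (n - k) = SS n := rfl
      rw [this, SS_eq, ← mul_pow]
    rw [tsum_congr hterm, tsum_geometric_of_lt_one (by positivity) (by linarith)]
  have hf0 : 0 ≤ f := tsum_nonneg (fun k => mul_nonneg (cbR_nonneg k) (pow_nonneg ht0 k))
  have hfeq : f = 1 / Real.sqrt (1 - 4 * t) := by
    have : f = Real.sqrt (f * f) := by rw [Real.sqrt_mul_self hf0]
    rw [this, hsq, Real.sqrt_inv, one_div]
  rw [← hfeq]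
  exact hsum.hasSum

lemma trinom_eq (k k' : ℕ) :
    ((2 * k + k').factorial : ℝ) / ((k.factorial : ℝ) * k.factorial * k'.factorial)
    = cbR k * ((k' + 2 * k).choose (2 * k) : ℝ) := by
  have h1 : (2 * k).choose k * (k.factorial * k.factorial) = (2 * k).factorial := by
    have := Nat.choose_mul_factorial_mul_factorial (show k ≤ 2 * k by omega)
    have h2k : 2 * k - k = k := by omega
    rw [h2k] at this
    rwa [mul_assoc] at this
  have h2 : (k' + 2 * k).choose (2 * k) * ((2 * k).factorial * k'.factorial)
      = (k' + 2 * k).factorial := by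
    have := Nat.choose_mul_factorial_mul_factorial (show 2 * k ≤ k' + 2 * k by omega)
    rw [Nat.add_sub_cancel] at this
    rwa [mul_assoc] at this
  have hnat : Nat.centralBinom k * (k' + 2 * k).choose (2 * k)
      * (k.factorial * k.factorial * k'.factorial) = (2 * k + k').factorial := by
    rw [Nat.centralBinom]
    calc (2 * k).choose k * (k' + 2 * k).choose (2 * k)
          * (k.factorial * k.factorial * k'.factorial)
        = (k' + 2 * k).choose (2 * k) * (((2 * k).choose k * (k.factorial * k.factorial))
            * k'.factorial) := by ring
      _ = (k' + 2 * k).choose (2 * k) * ((2 * k).factorial * k'.factorial) := by rw [h1]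
      _ = (k' + 2 * k).factorial := h2
      _ = (2 * k + k').factorial := by rw [Nat.add_comm]
  have hne : (k.factorial : ℝ) * k.factorial * k'.factorial ≠ 0 := by
    positivity
  rw [div_eq_iff hne]
  have hR := congrArg (fun n : ℕ => (n : ℝ)) hnat
  push_cast at hR
  rw [cbR]
  linarith [hR]

theorem stmt_12' (x y : ℝ) (hx : 0 ≤ x) (hy0 : 0 ≤ y) (hy1 : y < 1)
    (hxy : x < (1 - y) ^ 2 / 4) :
    Summable (fun p : ℕ × ℕ =>
      ((2 * p.1 + p.2).factorial : ℝ) /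
        ((p.1.factorial : ℝ) * p.1.factorial * p.2.factorial) * x ^ p.1 * y ^ p.2) ∧
    ∑' p : ℕ × ℕ,
      ((2 * p.1 + p.2).factorial : ℝ) /
        ((p.1.factorial : ℝ) * p.1.factorial * p.2.factorial) * x ^ p.1 * y ^ p.2
      = ((1 - y) ^ 2 - 4 * x) ^ (-(1 : ℝ) / 2) := by
  set F : ℕ × ℕ → ℝ := fun p =>
      ((2 * p.1 + p.2).factorial : ℝ) /
        ((p.1.factorial : ℝ) * p.1.factorial * p.2.factorial) * x ^ p.1 * y ^ p.2 with hF
  have hy : (0 : ℝ) < 1 - y := by linarith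
  have ht0 : 0 ≤ x / (1 - y) ^ 2 := div_nonneg hx (by positivity)
  have ht : x / (1 - y) ^ 2 < 1 / 4 := by
    rw [div_lt_iff₀ (by positivity : (0:ℝ) < (1 - y) ^ 2)]
    linarith
  have hA : (0 : ℝ) < (1 - y) ^ 2 - 4 * x := by nlinarith
  have hyn : ‖y‖ < 1 := by rwa [Real.norm_eq_abs, abs_of_nonneg hy0]
  have fib : ∀ k : ℕ, HasSum (fun k' => F (k, k'))
      ((cbR k * x ^ k) * (1 / (1 - y) ^ (2 * k + 1))) := by
    intro k
    have h := (hasSum_choose_mul_geometric_of_norm_lt_one (𝕜 := ℝ) (2 * k) hyn).mul_left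
      (cbR k * x ^ k)
    refine h.congr_fun (fun k' => ?_)
    simp only [hF]
    rw [trinom_eq]
    ring
  have outer_eq : ∀ k : ℕ, (cbR k * x ^ k) * (1 / (1 - y) ^ (2 * k + 1))
      = (1 / (1 - y)) * (cbR k * (x / (1 - y) ^ 2) ^ k) := by
    intro k
    have hp : (1 - y) ^ (2 * k + 1) = ((1 - y) ^ 2) ^ k * (1 - y) := by
      rw [pow_succ, pow_mul]
    have h2 : ((1 - y) ^ 2) ^ k ≠ 0 := by positivity
    have h3 : (1 - y) ≠ 0 := ne_of_gt hy
    rw [hp, div_pow]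
    field_simp
  have houter : HasSum (fun k : ℕ => (1 / (1 - y)) * (cbR k * (x / (1 - y) ^ 2) ^ k))
      ((1 / (1 - y)) * (1 / Real.sqrt (1 - 4 * (x / (1 - y) ^ 2)))) :=
    (cb_tsum ht0 ht).mul_left _
  have hval : (1 / (1 - y)) * (1 / Real.sqrt (1 - 4 * (x / (1 - y) ^ 2)))
      = ((1 - y) ^ 2 - 4 * x) ^ (-(1 : ℝ) / 2) := by
    have h1 : 1 - 4 * (x / (1 - y) ^ 2) = ((1 - y) ^ 2 - 4 * x) / (1 - y) ^ 2 := by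
      field_simp
    have hsA : Real.sqrt ((1 - y) ^ 2 - 4 * x) ≠ 0 := ne_of_gt (Real.sqrt_pos.mpr hA)
    have h3 : (1 - y) ≠ 0 := ne_of_gt hy
    rw [h1, Real.sqrt_div hA.le, Real.sqrt_sq hy.le]
    rw [show (-(1:ℝ)/2) = -(1/2 : ℝ) by ring, Real.rpow_neg hA.le, ← Real.sqrt_eq_rpow]
    field_simp
  have hFnn : ∀ p : ℕ × ℕ, 0 ≤ F p := by
    intro p
    simp only [hF]
    positivity
  have hsumm : Summable F := by
    rw [summable_prod_of_nonneg hFnn]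
    refine ⟨fun k => (fib k).summable, ?_⟩
    exact houter.summable.congr (fun k => ((fib k).tsum_eq.trans (outer_eq k)).symm)
  refine ⟨hsumm, ?_⟩
  rw [Summable.tsum_prod hsumm]
  rw [tsum_congr (fun k => (fib k).tsum_eq.trans (outer_eq k))]
  rw [houter.tsum_eq, hval]



/-- For 0 ≤ y < 1 and 0 ≤ x < (1−y)²/4, the double series of trinomial
coefficients ∑_{k,k'} (2k+k')!/(k!k!k'!) xᵏ y^{k'} converges and equals
((1−y)² − 4x)^{−1/2}. -/
theorem stmt_12 (x y : ℝ) (hx : 0 ≤ x) (hy0 : 0 ≤ y) (hy1 : y < 1)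
    (hxy : x < (1 - y) ^ 2 / 4) :
    Summable (fun p : ℕ × ℕ =>
      ((2 * p.1 + p.2).factorial : ℝ) /
        ((p.1.factorial : ℝ) * p.1.factorial * p.2.factorial) * x ^ p.1 * y ^ p.2) ∧
    ∑' p : ℕ × ℕ,
      ((2 * p.1 + p.2).factorial : ℝ) /
        ((p.1.factorial : ℝ) * p.1.factorial * p.2.factorial) * x ^ p.1 * y ^ p.2
      = ((1 - y) ^ 2 - 4 * x) ^ (-(1 : ℝ) / 2) := by
  exact stmt_12' x y hx hy0 hy1 hxy
end

section
/- Let (s_n)_{n≥0} be a nonincreasing sequence of nonnegative real numbers, and suppose there exist constants C > 0 and α > 0 such that ∑_{k≥n} s_k ∼ C n^{−α} as n → ∞. Then s_n ∼ α C n^{−α−1} as n → ∞. -/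
open Filter Real Finset

/-- slope limit: ((1+δ)^(-α) - 1)/δ → -α as δ → 0. -/
private lemma aux_slope {α : ℝ} (hα : 0 < α) :
    Tendsto (fun δ : ℝ => ((1 + δ) ^ (-α) - 1) / δ) (nhdsWithin 0 {(0:ℝ)}ᶜ) (nhds (-α)) := by
  have h0 : HasDerivAt (fun x : ℝ => x ^ (-α)) (-α * (1:ℝ) ^ (-α - 1)) 1 :=
    Real.hasDerivAt_rpow_const (Or.inl one_ne_zero)
  have h2 : HasDerivAt (fun x : ℝ => 1 + x) 1 0 := by
    simpa using (hasDerivAt_id (0:ℝ)).const_add 1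
  have h1 : HasDerivAt (fun x : ℝ => (1 + x) ^ (-α)) (-α) 0 := by
    have h0' : HasDerivAt (fun x : ℝ => x ^ (-α)) (-α * (1:ℝ) ^ (-α - 1))
        ((fun x : ℝ => 1 + x) 0) := by simpa using h0
    have := h0'.comp 0 h2
    simp only [Real.one_rpow, mul_one] at this
    exact this
  have := hasDerivAt_iff_tendsto_slope.mp h1
  refine this.congr fun δ => ?_
  simp [slope_def_field]

/-- The "g" limit used for the lower bound. -/
private lemma aux_g {α : ℝ} (hα : 0 < α) :
    Tendsto (fun δ : ℝ => (1 - (1 + δ) ^ (-α)) / (α * δ)) (nhdsWithin 0 (Set.Ioi 0)) (nhds 1) := by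
  have h := (aux_slope hα).mono_left (nhdsWithin_mono 0 (by
    intro x hx
    exact fun h => (ne_of_gt hx) h))
  have h2 : Tendsto (fun δ : ℝ => -(((1 + δ) ^ (-α) - 1) / δ) / α)
      (nhdsWithin 0 (Set.Ioi 0)) (nhds (-(-α) / α)) := (h.neg).div_const α
  have hval : -(-α) / α = 1 := by field_simp
  rw [hval] at h2
  refine h2.congr fun δ => ?_
  ring

/-- The "u" limit used for the upper bound. -/
private lemma aux_u {α : ℝ} (hα : 0 < α) :
    Tendsto (fun δ : ℝ => ((1 - δ) ^ (-α) - 1) / (α * δ)) (nhdsWithin 0 (Set.Ioi 0)) (nhds 1) := by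
  have hneg : Tendsto (fun δ : ℝ => -δ) (nhdsWithin 0 (Set.Ioi 0)) (nhdsWithin 0 {(0:ℝ)}ᶜ) := by
    refine tendsto_nhdsWithin_of_tendsto_nhds_of_eventually_within _ ?_ ?_
    · have : Tendsto (fun δ : ℝ => -δ) (nhds 0) (nhds (-0)) := (continuous_neg.tendsto (0:ℝ))
      simpa using this.mono_left nhdsWithin_le_nhds
    · filter_upwards [self_mem_nhdsWithin] with x hx
      simp only [Set.mem_compl_iff, Set.mem_singleton_iff]
      exact neg_ne_zero.mpr (ne_of_gt hx)
  have h := (aux_slope hα).comp hneg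
  have h2 : Tendsto (fun δ : ℝ => -(((1 + -δ) ^ (-α) - 1) / -δ) / α)
      (nhdsWithin 0 (Set.Ioi 0)) (nhds (-(-α) / α)) := (h.neg).div_const α
  have hval : -(-α) / α = 1 := by field_simp
  rw [hval] at h2
  refine h2.congr fun δ => ?_
  have : (1 : ℝ) + -δ = 1 - δ := by ring
  rw [this]
  ring

/-- ratio lemma: tail at m N compared with C N^(-α). -/
private lemma aux_ratio (s : ℕ → ℝ) (C α : ℝ) (hC : 0 < C) (hα : 0 < α)
    (htail : Tendsto (fun n : ℕ => (∑' k : ℕ, s (n + k)) / (C * (n : ℝ) ^ (-α)))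
      atTop (nhds 1))
    (m : ℕ → ℕ) (c : ℝ) (hc : 0 < c)
    (hm : Tendsto (fun N : ℕ => (m N : ℝ) / N) atTop (nhds c)) :
    Tendsto (fun N : ℕ => (∑' k : ℕ, s (m N + k)) / (C * (N : ℝ) ^ (-α)))
      atTop (nhds (c ^ (-α))) := by
  set TT : ℕ → ℝ := fun n => ∑' k : ℕ, s (n + k) with hTT
  -- m N → atTop
  have hmtop : Tendsto m atTop atTop := by
    rw [← tendsto_natCast_atTop_iff (R := ℝ)]
    have hev : ∀ᶠ N : ℕ in atTop, (c / 2) * N ≤ (m N : ℝ) := by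
      have h1 : ∀ᶠ N : ℕ in atTop, c / 2 < (m N : ℝ) / N :=
        hm.eventually_const_lt (by linarith)
      filter_upwards [h1, eventually_gt_atTop 0] with N h hN
      have hNpos : (0:ℝ) < N := by exact_mod_cast hN
      calc (c/2) * N ≤ ((m N : ℝ)/N) * N := by
            apply mul_le_mul_of_nonneg_right h.le hNpos.le
        _ = (m N : ℝ) := by field_simp
    apply tendsto_atTop_mono' _ hev
    exact (tendsto_natCast_atTop_atTop.const_mul_atTop (by linarith))
  have h1 : Tendsto (fun N : ℕ => TT (m N) / (C * (m N : ℝ) ^ (-α))) atTop (nhds 1) :=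
    htail.comp hmtop
  have h2 : Tendsto (fun N : ℕ => ((m N : ℝ) / N) ^ (-α)) atTop (nhds (c ^ (-α))) :=
    hm.rpow_const (Or.inl (ne_of_gt hc))
  have h3 := h1.mul h2
  rw [one_mul] at h3
  refine h3.congr' ?_
  have hm1 : ∀ᶠ N : ℕ in atTop, 1 ≤ m N := hmtop.eventually (eventually_ge_atTop 1)
  filter_upwards [hm1, eventually_ge_atTop 1] with N hmN hN
  have hMpos : (0:ℝ) < (m N : ℝ) := by exact_mod_cast hmN
  have hNpos : (0:ℝ) < (N : ℝ) := by exact_mod_cast hN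
  rw [div_rpow hMpos.le hNpos.le]
  have hMne : ((m N : ℝ)) ^ (-α) ≠ 0 := (rpow_pos_of_pos hMpos _).ne'
  have hNne : ((N : ℝ)) ^ (-α) ≠ 0 := (rpow_pos_of_pos hNpos _).ne'
  field_simp
  ring

/-- Monotone density/Tauberian argument: if (s_n) is nonincreasing, nonnegative,
summable, and ∑_{k≥n} s_k ∼ C n^{−α}, then s_n ∼ αC n^{−α−1}. -/
theorem stmt_14 (s : ℕ → ℝ) (hnn : ∀ n, 0 ≤ s n) (hmono : ∀ n, s (n + 1) ≤ s n)
    (hsum : Summable s) (C α : ℝ) (hC : 0 < C) (hα : 0 < α)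
    (htail : Filter.Tendsto
      (fun n : ℕ => (∑' k : ℕ, s (n + k)) / (C * (n : ℝ) ^ (-α)))
      Filter.atTop (nhds 1)) :
    Filter.Tendsto (fun n : ℕ => s n / (α * C * (n : ℝ) ^ (-α - 1)))
      Filter.atTop (nhds 1) := by
  have hanti : Antitone s := antitone_nat_of_succ_le hmono
  -- tail difference identity
  have tail_diff : ∀ n k : ℕ,
      (∑' j : ℕ, s (n + j)) - (∑' j : ℕ, s ((n + k) + j)) = ∑ j ∈ range k, s (n + j) := by
    intro n k
    have hsum' : Summable (fun i => s (n + i)) := by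
      have := (summable_nat_add_iff (f := s) n).mpr hsum
      exact this.congr (fun i => by rw [Nat.add_comm])
    have h := hsum'.sum_add_tsum_nat_add k
    have h2 : ∑' i : ℕ, s (n + (i + k)) = ∑' j : ℕ, s ((n + k) + j) := by
      apply tsum_congr
      intro i
      congr 1
      omega
    rw [h2] at h
    linarith
  -- bounds on the partial sums
  have sum_ub : ∀ n k : ℕ, ∑ j ∈ range k, s (n + j) ≤ (k : ℝ) * s n := by
    intro n k
    calc ∑ j ∈ range k, s (n + j) ≤ ∑ _j ∈ range k, s n :=
          Finset.sum_le_sum fun j _ => hanti (Nat.le_add_right n j)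
      _ = (k : ℝ) * s n := by simp [mul_comm]
  have sum_lb : ∀ n k : ℕ, (k : ℝ) * s (n + k) ≤ ∑ j ∈ range k, s (n + j) := by
    intro n k
    calc (k:ℝ) * s (n + k) = ∑ _j ∈ range k, s (n + k) := by simp [mul_comm]
      _ ≤ ∑ j ∈ range k, s (n + j) :=
          Finset.sum_le_sum fun j hj => hanti (by have := Finset.mem_range.mp hj; omega)
  rw [Metric.tendsto_atTop]
  intro ε hε
  -- choose δ
  have hδex : ∃ δ : ℝ, 0 < δ ∧ δ < 1 ∧
      |(1 - (1 + δ) ^ (-α)) / (α * δ) - 1| < ε / 2 ∧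
      |((1 - δ) ^ (-α) - 1) / (α * δ) - 1| < ε / 2 := by
    have hg := Metric.tendsto_nhds.mp (aux_g hα) (ε/2) (by linarith)
    have hu := Metric.tendsto_nhds.mp (aux_u hα) (ε/2) (by linarith)
    have hlt : ∀ᶠ δ : ℝ in nhdsWithin 0 (Set.Ioi 0), δ < 1 := by
      have : Set.Iio (1:ℝ) ∈ nhdsWithin (0:ℝ) (Set.Ioi 0) :=
        nhdsWithin_le_nhds (Iio_mem_nhds one_pos)
      filter_upwards [this] with x hx
      exact hx
    have := (hg.and (hu.and (hlt.and self_mem_nhdsWithin))).exists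
    obtain ⟨δ, h1, h2, h3, h4⟩ := this
    exact ⟨δ, h4, h3, by simpa [Real.dist_eq] using h1, by simpa [Real.dist_eq] using h2⟩
  obtain ⟨δ, hδ0, hδ1, hgδ, huδ⟩ := hδex
  set hh : ℕ → ℕ := fun N => ⌈δ * N⌉₊ with hhh
  -- ratio h N / N → δ
  have hratio : Tendsto (fun N : ℕ => (hh N : ℝ) / N) atTop (nhds δ) := by
    apply tendsto_of_tendsto_of_tendsto_of_le_of_le'
      (g := fun _ : ℕ => δ) (h := fun N : ℕ => δ + 1 / N)
    · exact tendsto_const_nhds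
    · simpa using (tendsto_const_nhds (x := δ)).add
        (tendsto_one_div_atTop_nhds_zero_nat)
    · filter_upwards [eventually_ge_atTop 1] with N hN
      have hNpos : (0:ℝ) < N := by exact_mod_cast hN
      rw [le_div_iff₀ hNpos]
      exact Nat.le_ceil _
    · filter_upwards [eventually_ge_atTop 1] with N hN
      have hNpos : (0:ℝ) < N := by exact_mod_cast hN
      rw [div_le_iff₀ hNpos]
      have h1 : (hh N : ℝ) ≤ δ * N + 1 :=
        (Nat.ceil_lt_add_one (by positivity : (0:ℝ) ≤ δ * N)).le
      calc (hh N : ℝ) ≤ δ * N + 1 := h1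
        _ = (δ + 1/N) * N := by field_simp
  -- basic eventual facts
  have hhpos : ∀ᶠ N : ℕ in atTop, 1 ≤ hh N := by
    filter_upwards [eventually_ge_atTop 1] with N hN
    have hNpos : (0:ℝ) < N := by exact_mod_cast hN
    exact Nat.ceil_pos.mpr (by positivity)
  have hsmall : ∀ᶠ N : ℕ in atTop, hh N ≤ N := by
    filter_upwards [hratio.eventually_lt_const hδ1, eventually_ge_atTop 1] with N hlt hN
    have hNpos : (0:ℝ) < N := by exact_mod_cast hN
    have := (div_lt_one hNpos).mp hlt
    exact_mod_cast this.le
  -- ratios for shifted indices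
  have hplus : Tendsto (fun N : ℕ => ((N + hh N : ℕ) : ℝ) / N) atTop (nhds (1 + δ)) := by
    have h := (tendsto_const_nhds (x := (1:ℝ))).add hratio
    refine h.congr' ?_
    filter_upwards [eventually_ge_atTop 1] with N hN
    have hNne : ((N:ℝ)) ≠ 0 := by
      have : (0:ℝ) < N := by exact_mod_cast hN
      exact this.ne'
    push_cast
    field_simp
  have hminus : Tendsto (fun N : ℕ => ((N - hh N : ℕ) : ℝ) / N) atTop (nhds (1 - δ)) := by
    have h := (tendsto_const_nhds (x := (1:ℝ))).sub hratio
    refine h.congr' ?_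
    filter_upwards [eventually_ge_atTop 1, hsmall] with N hN hle
    have hNne : ((N:ℝ)) ≠ 0 := by
      have : (0:ℝ) < N := by exact_mod_cast hN
      exact this.ne'
    rw [Nat.cast_sub hle, sub_div, div_self hNne]
  -- tail limits
  have hTp := aux_ratio s C α hC hα htail (fun N => N + hh N) (1+δ) (by linarith) hplus
  have hTm := aux_ratio s C α hC hα htail (fun N => N - hh N) (1-δ) (by linarith) hminus
  -- difference limits
  have hdp : Tendsto (fun N : ℕ =>
      ((∑' j : ℕ, s (N + j)) - ∑' j : ℕ, s ((N + hh N) + j)) / (C * (N:ℝ) ^ (-α)))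
      atTop (nhds (1 - (1+δ) ^ (-α))) := by
    have := htail.sub hTp
    refine this.congr fun N => ?_
    rw [sub_div]
  have hdm : Tendsto (fun N : ℕ =>
      ((∑' j : ℕ, s ((N - hh N) + j)) - ∑' j : ℕ, s (N + j)) / (C * (N:ℝ) ^ (-α)))
      atTop (nhds ((1-δ) ^ (-α) - 1)) := by
    have := hTm.sub htail
    refine this.congr fun N => ?_
    rw [sub_div]
  -- inverse factor limit
  have hinv : Tendsto (fun N : ℕ => (N:ℝ) / (α * hh N)) atTop (nhds (1/(α*δ))) := by
    have h := hratio.const_mul α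
    have h2 := h.inv₀ (by positivity : (α*δ) ≠ 0)
    have : (α * δ)⁻¹ = 1/(α*δ) := by rw [one_div]
    rw [this] at h2
    refine h2.congr' ?_
    filter_upwards [eventually_ge_atTop 1, hhpos] with N hN hh1
    have hNne : ((N:ℝ)) ≠ 0 := by
      have : (0:ℝ) < N := by exact_mod_cast hN
      exact this.ne'
    have hhne : ((hh N : ℝ)) ≠ 0 := by
      have : (0:ℝ) < (hh N : ℝ) := by exact_mod_cast hh1
      exact this.ne'
    field_simp
  -- the two bounding sequences
  have hA := hdp.mul hinv
  have hB := hdm.mul hinv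
  rw [mul_one_div] at hA hB
  have hAev := Metric.tendsto_atTop.mp hA (ε/2) (by linarith)
  have hBev := Metric.tendsto_atTop.mp hB (ε/2) (by linarith)
  obtain ⟨N₁, hN₁⟩ := hAev
  obtain ⟨N₂, hN₂⟩ := hBev
  -- eventual sandwich
  have hsand : ∀ᶠ N : ℕ in atTop,
      ((∑' j : ℕ, s (N + j)) - ∑' j : ℕ, s ((N + hh N) + j)) / (C * (N:ℝ) ^ (-α))
        * ((N:ℝ)/(α * hh N)) ≤ s N / (α * C * (N:ℝ) ^ (-α - 1)) ∧
      s N / (α * C * (N:ℝ) ^ (-α - 1)) ≤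
      ((∑' j : ℕ, s ((N - hh N) + j)) - ∑' j : ℕ, s (N + j)) / (C * (N:ℝ) ^ (-α))
        * ((N:ℝ)/(α * hh N)) := by
    filter_upwards [eventually_ge_atTop 1, hhpos, hsmall] with N hN hh1 hle
    have hNpos : (0:ℝ) < N := by exact_mod_cast hN
    have hhRpos : (0:ℝ) < (hh N : ℝ) := by exact_mod_cast hh1
    have hrppos : (0:ℝ) < (N:ℝ) ^ (-α-1) := rpow_pos_of_pos hNpos _
    have hrpos : (0:ℝ) < (N:ℝ) ^ (-α) := rpow_pos_of_pos hNpos _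
    have hKpos : (0:ℝ) < α * C * (N:ℝ) ^ (-α-1) := by positivity
    have hrw : (N:ℝ) ^ (-α) = (N:ℝ) ^ (-α-1) * N := by
      have h := Real.rpow_add hNpos (-α-1) 1
      rw [Real.rpow_one] at h
      rw [show -α-1+1 = -α by ring] at h
      exact h
    constructor
    · -- lower bound
      set D := (∑' j : ℕ, s (N + j)) - ∑' j : ℕ, s ((N + hh N) + j) with hD
      have hDle : D ≤ (hh N : ℝ) * s N := by
        rw [hD, tail_diff N (hh N)]
        exact sum_ub N (hh N)
      have heq : D / (C * (N:ℝ) ^ (-α)) * ((N:ℝ)/(α * hh N))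
          = (D / (hh N : ℝ)) / (α * C * (N:ℝ) ^ (-α-1)) := by
        rw [hrw]
        field_simp
      rw [heq]
      apply (div_le_div_iff_of_pos_right hKpos).mpr
      exact (div_le_iff₀ hhRpos).mpr (by linarith [hDle])
    · -- upper bound
      set E := (∑' j : ℕ, s ((N - hh N) + j)) - ∑' j : ℕ, s (N + j) with hE
      have hkey : (N - hh N) + hh N = N := by omega
      have hEge : (hh N : ℝ) * s N ≤ E := by
        have h1 := tail_diff (N - hh N) (hh N)
        rw [hkey] at h1
        have h2 := sum_lb (N - hh N) (hh N)
        rw [hkey] at h2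
        rw [hE, h1]
        exact h2
      have heq : E / (C * (N:ℝ) ^ (-α)) * ((N:ℝ)/(α * hh N))
          = (E / (hh N : ℝ)) / (α * C * (N:ℝ) ^ (-α-1)) := by
        rw [hrw]
        field_simp
      rw [heq]
      apply (div_le_div_iff_of_pos_right hKpos).mpr
      exact (le_div_iff₀ hhRpos).mpr (by linarith [hEge])
  -- final assembly
  obtain ⟨N₃, hN₃⟩ := eventually_atTop.mp hsand
  refine ⟨max N₁ (max N₂ N₃), fun n hn => ?_⟩
  have h1 := hN₁ n (le_trans (le_max_left _ _) hn)
  have h2 := hN₂ n (le_trans (le_trans (le_max_left _ _) (le_max_right _ _)) hn)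
  have h3 := hN₃ n (le_trans (le_trans (le_max_right _ _) (le_max_right _ _)) hn)
  rw [Real.dist_eq, abs_sub_lt_iff] at h1 h2 ⊢
  rw [abs_sub_lt_iff] at hgδ huδ
  obtain ⟨h3a, h3b⟩ := h3
  constructor
  · linarith [h1.1, h1.2, h2.1, h2.2, hgδ.1, hgδ.2, huδ.1, huδ.2]
  · linarith [h1.1, h1.2, h2.1, h2.2, hgδ.1, hgδ.2, huδ.1, huδ.2]
end

section
/- For every real K with (√7 − 2)/3 < K < √3, the quadratic polynomial q(V) = (K² − 3)V² + 4(1 + K)² V + (K² − 3) satisfies q(0) < 0 and q(1) > 0, and hence has a real root in the open interval (0, 1). Moreover its discriminant equals 4(K² + 4K + 5)(3K² + 4K − 1) > 0, and V₊(K) = (2(K+1)² − √((K²+4K+5)(3K²+4K−1)))/(3 − K²) is a root of q lying in (0,1). -/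
/-- For (√7−2)/3 < K < √3, q(V) = (K²−3)V² + 4(1+K)²V + (K²−3) has q(0) < 0,
q(1) > 0, hence a root in (0,1); its discriminant equals
4(K²+4K+5)(3K²+4K−1) > 0, and V₊(K) = (2(K+1)² − √(…))/(3−K²) is a root in (0,1). -/
theorem stmt_18 (K : ℝ) (h1 : (Real.sqrt 7 - 2) / 3 < K) (h2 : K < Real.sqrt 3) :
    let q : ℝ → ℝ := fun V => (K ^ 2 - 3) * V ^ 2 + 4 * (1 + K) ^ 2 * V + (K ^ 2 - 3)
    let Vp : ℝ := (2 * (K + 1) ^ 2 -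
      Real.sqrt ((K ^ 2 + 4 * K + 5) * (3 * K ^ 2 + 4 * K - 1))) / (3 - K ^ 2)
    q 0 < 0 ∧ q 1 > 0 ∧ (∃ V ∈ Set.Ioo (0 : ℝ) 1, q V = 0) ∧
    (4 * (1 + K) ^ 2) ^ 2 - 4 * (K ^ 2 - 3) ^ 2
      = 4 * (K ^ 2 + 4 * K + 5) * (3 * K ^ 2 + 4 * K - 1) ∧
    0 < 4 * (K ^ 2 + 4 * K + 5) * (3 * K ^ 2 + 4 * K - 1) ∧
    q Vp = 0 ∧ Vp ∈ Set.Ioo (0 : ℝ) 1 := by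
  intro q Vp
  have h7 : Real.sqrt 7 ^ 2 = 7 := Real.sq_sqrt (by norm_num)
  have h7n : (0:ℝ) ≤ Real.sqrt 7 := Real.sqrt_nonneg 7
  have h3 : Real.sqrt 3 ^ 2 = 3 := Real.sq_sqrt (by norm_num)
  have h3n : (0:ℝ) ≤ Real.sqrt 3 := Real.sqrt_nonneg 3
  have h7two : (2:ℝ) ≤ Real.sqrt 7 := by nlinarith
  have hK0 : 0 < K := by linarith
  have hKlt : K ^ 2 < 3 := by nlinarith
  have hQ : 0 < 3 * K ^ 2 + 4 * K - 1 := by nlinarith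
  have ha : 0 < 3 - K ^ 2 := by linarith
  set D : ℝ := (K ^ 2 + 4 * K + 5) * (3 * K ^ 2 + 4 * K - 1) with hDdef
  have hD : 0 < D := mul_pos (by nlinarith) hQ
  have hs : Real.sqrt D ^ 2 = D := Real.sq_sqrt hD.le
  have hsn : (0:ℝ) ≤ Real.sqrt D := Real.sqrt_nonneg D
  have hb : Real.sqrt D < 2 * (K + 1) ^ 2 := by nlinarith
  have hba : 3 * K ^ 2 + 4 * K - 1 < Real.sqrt D := by nlinarith
  have hVp0 : 0 < Vp := div_pos (by linarith) ha
  have hVp1 : Vp < 1 := by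
    rw [show Vp = (2 * (K + 1) ^ 2 - Real.sqrt D) / (3 - K ^ 2) from rfl,
      div_lt_one ha]
    linarith
  have hroot : q Vp = 0 := by
    show (K ^ 2 - 3) * Vp ^ 2 + 4 * (1 + K) ^ 2 * Vp + (K ^ 2 - 3) = 0
    rw [show Vp = (2 * (K + 1) ^ 2 - Real.sqrt D) / (3 - K ^ 2) from rfl]
    field_simp
    nlinarith [hs, sq_nonneg (Real.sqrt D)]
  refine ⟨by simp [q]; nlinarith, by simp [q]; nlinarith,
    ⟨Vp, ⟨hVp0, hVp1⟩, hroot⟩, by ring, by nlinarith, hroot, hVp0, hVp1⟩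
end
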